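/- Let R₁ > 0, C > 0, and let v₀, v₁ : [R₁,∞) → ℝ be continuously differentiable. Assume that for every R ≥ R₁ the integral ∫_{R}^{∞} [ (v₀'(r)/r)² + (v₁'(r))² ] dr is finite and satisfies ( ∫_{R}^{∞} [ (v₀'(r)/r)² + (v₁'(r))² ] dr )^{1/2} ≤ C·R^{−1}·( 3R^{−3}·v₀(R)² + R^{−1}·v₁(R)² )^{3/2}. Then there exists a constant C′, depending only on C, such that for all r, r′ with R₁ ≤ r ≤ r′ ≤ 2r: |v₀(r) − v₀(r′)| ≤ C′·( r^{−4}·|v₀(r)|³ + r^{−1}·|v₁(r)|³ ) and |v₁(r) − v₁(r′)| ≤ C′·( r^{−5}·|v₀(r)|³ + r^{−2}·|v₁(r)|³ ). -/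

import Mathlib

open Set MeasureTheory

lemma core_poly (u w : ℝ) (hu : 0 ≤ u) (hw : 0 ≤ w) :
    (3*u^2 + w^2)^3 ≤ (441/4) * (u^3 + w^3)^2 := by
  nlinarith [mul_nonneg (sq_nonneg (u^2 - w^2)) (by positivity : (0:ℝ) ≤ 2*u^2 + w^2),
    mul_nonneg (sq_nonneg (u^2 - w^2)) (by positivity : (0:ℝ) ≤ u^2 + 2*w^2),
    mul_nonneg (pow_nonneg hu 3) (pow_nonneg hw 3), pow_nonneg hu 6, pow_nonneg hw 6]

-- Cauchy-Schwarz on Ioc r r' : ∫ |f| * g ≤ √(∫ f²) * √(∫ g²)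
lemma cs_aux {r r' : ℝ} (f g : ℝ → ℝ) (hg : ∀ t ∈ Ioc r r', 0 ≤ g t)
    (hf : MemLp f 2 (volume.restrict (Ioc r r')))
    (hgm : MemLp g 2 (volume.restrict (Ioc r r'))) :
    ∫ t in Ioc r r', |f t| * g t ≤
      Real.sqrt (∫ t in Ioc r r', (f t)^2) * Real.sqrt (∫ t in Ioc r r', (g t)^2) := by
  have hconj : Real.HolderConjugate 2 2 := ⟨by norm_num, by norm_num, by norm_num⟩
  have h2 : ENNReal.ofReal (2:ℝ) = 2 := by norm_num
  have h := integral_mul_le_Lp_mul_Lq_of_nonneg (μ := volume.restrict (Ioc r r')) hconj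
    (f := fun t => |f t|) (g := g) (Filter.Eventually.of_forall fun t => abs_nonneg _)
    ((ae_restrict_mem measurableSet_Ioc).mono hg) (h2 ▸ hf.abs) (h2 ▸ hgm)
  have e1 : ∀ x : ℝ, x ^ (2:ℝ) = x ^ (2:ℕ) := fun x => by
    rw [show (2:ℝ) = ((2:ℕ):ℝ) by norm_num, Real.rpow_natCast]
  simpa [e1, sq_abs, Real.sqrt_eq_rpow] using h

set_option maxHeartbeats 1000000 in
/-- Difference estimates (Corollary 6.10) from the channel-of-energy inequality
written in the variables v₀, v₁. -/
theorem difference_estimates_from_channel (R₁ C : ℝ) (hR₁ : 0 < R₁) (hC : 0 < C)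
    (v₀ v₁ : ℝ → ℝ)
    (hv₀ : ContDiffOn ℝ 1 v₀ (Ici R₁)) (hv₁ : ContDiffOn ℝ 1 v₁ (Ici R₁))
    (hint : ∀ R ≥ R₁,
      IntegrableOn (fun r => (deriv v₀ r / r) ^ 2 + (deriv v₁ r) ^ 2) (Ici R) ∧
      Real.sqrt (∫ r in Ici R, ((deriv v₀ r / r) ^ 2 + (deriv v₁ r) ^ 2)) ≤
        C * R⁻¹ * (3 * (v₀ R) ^ 2 / R ^ 3 + (v₁ R) ^ 2 / R) ^ ((3:ℝ)/2)) :
    ∃ C' : ℝ, ∀ r r' : ℝ, R₁ ≤ r → r ≤ r' → r' ≤ 2 * r →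
      |v₀ r - v₀ r'| ≤ C' * (|v₀ r| ^ 3 / r ^ 4 + |v₁ r| ^ 3 / r) ∧
      |v₁ r - v₁ r'| ≤ C' * (|v₀ r| ^ 3 / r ^ 5 + |v₁ r| ^ 3 / r ^ 2) := by
  refine ⟨21 * C, fun r r' hr hrr' hr2 => ?_⟩
  have hr0 : 0 < r := hR₁.trans_le hr
  obtain ⟨hgint, hS⟩ := hint r hr
  set g : ℝ → ℝ := fun t => (deriv v₀ t / t) ^ 2 + (deriv v₁ t) ^ 2 with hg_def
  set S : ℝ := Real.sqrt (∫ t in Ici r, g t) with hS_def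
  have hS0 : 0 ≤ S := Real.sqrt_nonneg _
  set f₀ : ℝ → ℝ := fun t => deriv v₀ t / t with hf₀_def
  have hm0 : Measurable (deriv v₀) := measurable_deriv v₀
  have hm1 : Measurable (deriv v₁) := measurable_deriv v₁
  have hmf₀ : Measurable f₀ := hm0.div measurable_id
  -- integrability of g on Ioc
  have hgIoc : IntegrableOn g (Ioc r r') := hgint.mono_set (Set.Ioc_subset_Ioi_self.trans Set.Ioi_subset_Ici_self)
  have hgnonneg : ∀ t, 0 ≤ g t := fun t => by positivity
  -- f₀², f₁² integrable on Ioc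
  have hf₀sq : IntegrableOn (fun t => (f₀ t)^2) (Ioc r r') :=
    hgIoc.mono' (hmf₀.pow_const 2).aestronglyMeasurable
      (Filter.Eventually.of_forall fun t => by
        rw [Real.norm_eq_abs, abs_of_nonneg (sq_nonneg _)]
        simp only [hg_def]; nlinarith [sq_nonneg (deriv v₁ t)])
  have hf₁sq : IntegrableOn (fun t => (deriv v₁ t)^2) (Ioc r r') :=
    hgIoc.mono' (hm1.pow_const 2).aestronglyMeasurable
      (Filter.Eventually.of_forall fun t => by
        rw [Real.norm_eq_abs, abs_of_nonneg (sq_nonneg _)]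
        simp only [hg_def]; nlinarith [sq_nonneg (f₀ t)])
  have htsq : IntegrableOn (fun t : ℝ => t^2) (Ioc r r') :=
    (continuous_pow 2).integrableOn_Ioc
  -- MemLp
  have hMf₀ : MemLp f₀ 2 (volume.restrict (Ioc r r')) :=
    (memLp_two_iff_integrable_sq hmf₀.aestronglyMeasurable).mpr hf₀sq
  have hMf₁ : MemLp (deriv v₁) 2 (volume.restrict (Ioc r r')) :=
    (memLp_two_iff_integrable_sq hm1.aestronglyMeasurable).mpr hf₁sq
  have hMt : MemLp (fun t : ℝ => t) 2 (volume.restrict (Ioc r r')) :=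
    (memLp_two_iff_integrable_sq measurable_id.aestronglyMeasurable).mpr htsq
  have : IsFiniteMeasure (volume.restrict (Ioc r r')) :=
    ⟨by rw [Measure.restrict_apply_univ, Real.volume_Ioc]; exact ENNReal.ofReal_lt_top⟩
  have hM1 : MemLp (fun _ : ℝ => (1:ℝ)) 2 (volume.restrict (Ioc r r')) := memLp_const 1
  -- bounds on sqrt of integrals
  have hsq₀ : Real.sqrt (∫ t in Ioc r r', (f₀ t)^2) ≤ S := by
    apply Real.sqrt_le_sqrt
    calc ∫ t in Ioc r r', (f₀ t)^2 ≤ ∫ t in Ioc r r', g t :=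
          setIntegral_mono_on hf₀sq hgIoc measurableSet_Ioc
            (fun t _ => by simp only [hg_def]; nlinarith [sq_nonneg (deriv v₁ t)])
      _ ≤ ∫ t in Ici r, g t :=
          setIntegral_mono_set hgint (Filter.Eventually.of_forall hgnonneg)
            (HasSubset.Subset.eventuallyLE (Set.Ioc_subset_Ioi_self.trans Set.Ioi_subset_Ici_self))
  have hsq₁ : Real.sqrt (∫ t in Ioc r r', (deriv v₁ t)^2) ≤ S := by
    apply Real.sqrt_le_sqrt
    calc ∫ t in Ioc r r', (deriv v₁ t)^2 ≤ ∫ t in Ioc r r', g t :=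
          setIntegral_mono_on hf₁sq hgIoc measurableSet_Ioc
            (fun t _ => by simp only [hg_def]; nlinarith [sq_nonneg (f₀ t)])
      _ ≤ ∫ t in Ici r, g t :=
          setIntegral_mono_set hgint (Filter.Eventually.of_forall hgnonneg)
            (HasSubset.Subset.eventuallyLE (Set.Ioc_subset_Ioi_self.trans Set.Ioi_subset_Ici_self))
  have hvol : volume.real (Ioc r r') = r' - r := by
    rw [measureReal_def, Real.volume_Ioc, ENNReal.toReal_ofReal (by linarith)]
  have hsqt : Real.sqrt (∫ t in Ioc r r', t^2) ≤ 2 * r * Real.sqrt r := by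
    have h1 : ∫ t in Ioc r r', t^2 ≤ 4 * r^3 := by
      calc ∫ t in Ioc r r', t^2 ≤ ∫ _ in Ioc r r', (2*r)^2 :=
            setIntegral_mono_on htsq ((integrableOn_const_iff).mpr (Or.inr (by
              rw [Real.volume_Ioc]; exact ENNReal.ofReal_lt_top))) measurableSet_Ioc
              (fun t ht => by nlinarith [ht.1, ht.2, hr0])
        _ = (r' - r) * (2*r)^2 := by rw [setIntegral_const, smul_eq_mul, hvol]
        _ ≤ 4 * r^3 := by nlinarith
    calc Real.sqrt (∫ t in Ioc r r', t^2) ≤ Real.sqrt ((2 * r * Real.sqrt r)^2) := by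
          apply Real.sqrt_le_sqrt
          rw [mul_pow, mul_pow, Real.sq_sqrt hr0.le]; linarith
      _ = 2 * r * Real.sqrt r := Real.sqrt_sq (by positivity)
  have hsqone : Real.sqrt (∫ _ in Ioc r r', (1:ℝ)^2) ≤ Real.sqrt r := by
    apply Real.sqrt_le_sqrt
    simp only [one_pow]
    rw [setIntegral_const, smul_eq_mul, hvol, mul_one]; linarith
  -- FTC pieces
  have hIoo : ∀ {x : ℝ}, x ∈ Ioo r r' → Ici R₁ ∈ nhds x := fun {x} hx =>
    mem_nhds_iff.mpr ⟨Ioi R₁, Ioi_subset_Ici_self, isOpen_Ioi, lt_of_le_of_lt hr hx.1⟩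
  have hIcc : Icc r r' ⊆ Ici R₁ := fun x hx => le_trans hr hx.1
  have hd₀ : ∀ x ∈ Ioo r r', HasDerivAt v₀ (deriv v₀ x) x := fun x hx =>
    (((hv₀.differentiableOn one_ne_zero) x (hIcc ⟨hx.1.le, hx.2.le⟩)).differentiableAt
      (hIoo hx)).hasDerivAt
  have hd₁ : ∀ x ∈ Ioo r r', HasDerivAt v₁ (deriv v₁ x) x := fun x hx =>
    (((hv₁.differentiableOn one_ne_zero) x (hIcc ⟨hx.1.le, hx.2.le⟩)).differentiableAt
      (hIoo hx)).hasDerivAt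
  -- integrability of derivatives
  have hderiv_eq : ∀ t ∈ Ioc r r', deriv v₀ t = f₀ t * t := fun t ht => by
    rw [hf₀_def]; exact (div_mul_cancel₀ _ (hr0.trans ht.1).ne').symm
  have hid₀ : IntegrableOn (deriv v₀) (Ioc r r') := by
    refine ((hf₀sq.add htsq).div_const 2).mono' hm0.aestronglyMeasurable ?_
    filter_upwards [ae_restrict_mem measurableSet_Ioc] with t ht
    rw [Real.norm_eq_abs, hderiv_eq t ht, abs_mul]
    have h1 : |t| = t := abs_of_pos (hr0.trans ht.1)
    simp only [Pi.add_apply]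
    nlinarith [sq_nonneg (|f₀ t| - |t|), abs_nonneg (f₀ t), abs_nonneg t, sq_abs (f₀ t), sq_abs t]
  have hone : IntegrableOn (fun _ : ℝ => (1:ℝ)) (Ioc r r') := (integrableOn_const_iff).mpr
    (Or.inr (by rw [Real.volume_Ioc]; exact ENNReal.ofReal_lt_top))
  have hid₁ : IntegrableOn (deriv v₁) (Ioc r r') := by
    refine ((hf₁sq.add hone).div_const 2).mono' hm1.aestronglyMeasurable ?_
    filter_upwards [] with t
    rw [Real.norm_eq_abs]
    simp only [Pi.add_apply]
    nlinarith [sq_nonneg (|deriv v₁ t| - 1), abs_nonneg (deriv v₁ t), sq_abs (deriv v₁ t)]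
  have hftc₀ : v₀ r' - v₀ r = ∫ t in r..r', deriv v₀ t :=
    (intervalIntegral.integral_eq_sub_of_hasDerivAt_of_le hrr'
      (hv₀.continuousOn.mono hIcc) hd₀
      ((intervalIntegrable_iff_integrableOn_Ioc_of_le hrr').mpr hid₀)).symm
  have hftc₁ : v₁ r' - v₁ r = ∫ t in r..r', deriv v₁ t :=
    (intervalIntegral.integral_eq_sub_of_hasDerivAt_of_le hrr'
      (hv₁.continuousOn.mono hIcc) hd₁
      ((intervalIntegrable_iff_integrableOn_Ioc_of_le hrr').mpr hid₁)).symm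
  -- main L¹ bounds
  have hbd₀ : |v₀ r - v₀ r'| ≤ S * (2 * r * Real.sqrt r) := by
    rw [abs_sub_comm, hftc₀]
    calc |∫ t in r..r', deriv v₀ t| ≤ ∫ t in r..r', |deriv v₀ t| :=
          intervalIntegral.abs_integral_le_integral_abs hrr'
      _ = ∫ t in Ioc r r', |deriv v₀ t| := intervalIntegral.integral_of_le hrr'
      _ = ∫ t in Ioc r r', |f₀ t| * t := by
          refine setIntegral_congr_fun measurableSet_Ioc fun t ht => ?_
          rw [hderiv_eq t ht, abs_mul, abs_of_pos (hr0.trans ht.1)]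
      _ ≤ Real.sqrt (∫ t in Ioc r r', (f₀ t)^2) * Real.sqrt (∫ t in Ioc r r', t^2) :=
          cs_aux f₀ (fun t => t) (fun t ht => (hr0.trans ht.1).le) hMf₀ hMt
      _ ≤ S * (2 * r * Real.sqrt r) :=
          mul_le_mul hsq₀ hsqt (Real.sqrt_nonneg _) hS0
  have hbd₁ : |v₁ r - v₁ r'| ≤ S * Real.sqrt r := by
    rw [abs_sub_comm, hftc₁]
    calc |∫ t in r..r', deriv v₁ t| ≤ ∫ t in r..r', |deriv v₁ t| :=
          intervalIntegral.abs_integral_le_integral_abs hrr'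
      _ = ∫ t in Ioc r r', |deriv v₁ t| := intervalIntegral.integral_of_le hrr'
      _ = ∫ t in Ioc r r', |deriv v₁ t| * 1 := by simp
      _ ≤ Real.sqrt (∫ t in Ioc r r', (deriv v₁ t)^2) * Real.sqrt (∫ _ in Ioc r r', (1:ℝ)^2) :=
          cs_aux (deriv v₁) (fun _ => 1) (fun t _ => zero_le_one) hMf₁ hM1
      _ ≤ S * Real.sqrt r := mul_le_mul hsq₁ hsqone (Real.sqrt_nonneg _) hS0
  -- rewrite the channel bound
  set u : ℝ := |v₀ r| with hu_def
  set w : ℝ := |v₁ r| * r with hw_def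
  have hu0 : 0 ≤ u := abs_nonneg _
  have hw0 : 0 ≤ w := mul_nonneg (abs_nonneg _) hr0.le
  have hQbase : 3 * (v₀ r)^2 / r^3 + (v₁ r)^2 / r = (3*u^2 + w^2) / r^3 := by
    rw [hu_def, hw_def, sq_abs, mul_pow, sq_abs]; field_simp
  have hQb0 : (0:ℝ) ≤ (3*u^2 + w^2) / r^3 := by positivity
  set Q : ℝ := ((3*u^2 + w^2) / r^3) ^ (3:ℕ) with hQ_def
  have hD : (3 * (v₀ r)^2 / r^3 + (v₁ r)^2 / r) ^ ((3:ℝ)/2) = Real.sqrt Q := by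
    rw [hQbase, Real.sqrt_eq_rpow, hQ_def, ← Real.rpow_natCast ((3*u^2 + w^2) / r^3) 3,
      ← Real.rpow_mul hQb0]
    norm_num
  rw [hD] at hS
  have hQ0 : 0 ≤ Q := by positivity
  -- key sqrt estimate : √(Q*r) ≤ (21/2) * (u³+w³)/r⁴
  have hkey : Real.sqrt (Q * r) ≤ (21/2) * ((u^3 + w^3) / r^4) := by
    have hqr : Q * r = (3*u^2 + w^2)^3 / r^8 := by
      rw [hQ_def]; field_simp
    have hrhs : ((21/2) * ((u^3 + w^3) / r^4))^2 = (441/4) * (u^3+w^3)^2 / r^8 := by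
      field_simp; ring
    calc Real.sqrt (Q * r) ≤ Real.sqrt (((21/2) * ((u^3 + w^3) / r^4))^2) := by
          apply Real.sqrt_le_sqrt
          rw [hqr, hrhs]
          exact (div_le_div_iff_of_pos_right (by positivity)).mpr (core_poly u w hu0 hw0)
      _ = (21/2) * ((u^3 + w^3) / r^4) := Real.sqrt_sq (by positivity)
  have hE₀ : |v₀ r|^3 / r^4 + |v₁ r|^3 / r = (u^3 + w^3) / r^4 := by
    rw [hu_def, hw_def, mul_pow]; field_simp
  have hE₁ : |v₀ r|^3 / r^5 + |v₁ r|^3 / r^2 = (u^3 + w^3) / r^5 := by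
    rw [hu_def, hw_def, mul_pow]; field_simp
  have hsqrtQr : Real.sqrt Q * Real.sqrt r = Real.sqrt (Q * r) := (Real.sqrt_mul hQ0 r).symm
  constructor
  · calc |v₀ r - v₀ r'| ≤ S * (2 * r * Real.sqrt r) := hbd₀
      _ ≤ (C * r⁻¹ * Real.sqrt Q) * (2 * r * Real.sqrt r) :=
          mul_le_mul_of_nonneg_right hS (by positivity)
      _ = 2 * C * (r⁻¹ * r) * (Real.sqrt Q * Real.sqrt r) := by ring
      _ = 2 * C * Real.sqrt (Q * r) := by
          rw [inv_mul_cancel₀ hr0.ne', hsqrtQr, mul_one]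
      _ ≤ 2 * C * ((21/2) * ((u^3 + w^3) / r^4)) :=
          mul_le_mul_of_nonneg_left hkey (by positivity)
      _ = 21 * C * (|v₀ r|^3 / r^4 + |v₁ r|^3 / r) := by rw [hE₀]; ring
  · calc |v₁ r - v₁ r'| ≤ S * Real.sqrt r := hbd₁
      _ ≤ (C * r⁻¹ * Real.sqrt Q) * Real.sqrt r :=
          mul_le_mul_of_nonneg_right hS (Real.sqrt_nonneg _)
      _ = C * r⁻¹ * Real.sqrt (Q * r) := by rw [← hsqrtQr]; ring
      _ ≤ C * r⁻¹ * ((21/2) * ((u^3 + w^3) / r^4)) :=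
          mul_le_mul_of_nonneg_left hkey (by positivity)
      _ ≤ 21 * C * (|v₀ r|^3 / r^5 + |v₁ r|^3 / r^2) := by
          rw [hE₁]
          rw [show C * r⁻¹ * ((21/2) * ((u^3 + w^3) / r^4)) = (21/2) * C * ((u^3+w^3)/r^5) by
            field_simp]
          have : (0:ℝ) ≤ (u^3+w^3)/r^5 := by positivity
          nlinarith
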